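/- For every integer k ≥ 1, a word w over the alphabet {U, D, L} is a k-box path (of some size n ≥ 1) if and only if there exist augmented (k+1)-Dyck paths μ_1, μ_2, …, μ_{k+1} (each possibly empty) such that w = μ_1 U μ_2 U ⋯ μ_{k+1} U D^k L. -/

import Mathlib

/-- The step alphabet for skew Dyck paths: up, down, left. -/
inductive Step : Type
  | U | D | L
  deriving DecidableEq

/-- Number of U steps in a word. -/
def countU (w : List Step) : ℕ := w.count Step.U
/-- Number of D steps in a word. -/
def countD (w : List Step) : ℕ := w.count Step.D
/-- Number of L steps in a word. -/
def countL (w : List Step) : ℕ := w.count Step.L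

/-- A skew Dyck path: every prefix has at least as many U's as D's and L's combined,
the totals balance, and there is no factor `UL` or `LU`. -/
def IsSkewDyck (w : List Step) : Prop :=
  (∀ p, p <+: w → countD p + countL p ≤ countU p) ∧
  countU w = countD w + countL w ∧
  ¬ [Step.U, Step.L] <:+: w ∧ ¬ [Step.L, Step.U] <:+: w

/-- The semilength of a skew Dyck path is its number of U's. -/
def semilength (w : List Step) : ℕ := countU w

/-- The factor `U D^k L`. -/
def boxFactor (k : ℕ) : List Step := Step.U :: (List.replicate k Step.D ++ [Step.L])

/-- The number of occurrences (starting positions) of `f` as a factor (contiguous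
subword) of `w`. -/
def numOccurrences (f w : List Step) : ℕ :=
  ((Finset.range (w.length + 1)).filter (fun i => f <+: w.drop i)).card

/-- A `k`-box path of size `n`: a skew Dyck path of semilength `(k+2)n - 1` with
exactly `n` occurrences of the factor `U D^k L`. -/
def IsBoxPath (k n : ℕ) (w : List Step) : Prop :=
  IsSkewDyck w ∧ semilength w = (k+2)*n - 1 ∧ numOccurrences (boxFactor k) w = n

/-- Number of returns: positions `i` such that the `(i+1)`-st letter is a `D` or `L`
and the prefix of length `i+1` is balanced (the path returns to the x-axis). -/
def numReturns (w : List Step) : ℕ :=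
  ((Finset.range w.length).filter (fun i =>
    (w[i]? = some Step.D ∨ w[i]? = some Step.L) ∧
    countU (w.take (i+1)) = countD (w.take (i+1)) + countL (w.take (i+1)))).card

/-- Number of long ascents: maximal runs of consecutive U's of length at least 2,
counted via their starting positions. -/
def numLongAscents (w : List Step) : ℕ :=
  ((Finset.range w.length).filter (fun i =>
    w[i]? = some Step.U ∧ w[i+1]? = some Step.U ∧
    (i = 0 ∨ w[i-1]? ≠ some Step.U))).card

/-- The word `U^{a_1} D^k L D U^{a_2} D^k L D ⋯ U^{a_{n-1}} D^k L D U^{a_n} D^k L`. -/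
def boxForm (k : ℕ) : List ℕ → List Step
  | [] => []
  | [a] => List.replicate a Step.U ++ List.replicate k Step.D ++ [Step.L]
  | a :: b :: rest =>
      List.replicate a Step.U ++ List.replicate k Step.D ++ [Step.L, Step.D] ++
        boxForm k (b :: rest)

/-- A block `U^b D^{k-1} L D` of an augmented `k`-Dyck path. -/
def augBlock (k b : ℕ) : List Step :=
  List.replicate b Step.U ++ List.replicate (k-1) Step.D ++ [Step.L, Step.D]

/-- The word `U^{b_1} D^{k-1} L D ⋯ U^{b_m} D^{k-1} L D`. -/
def augForm (k : ℕ) (b : List ℕ) : List Step := (b.map (augBlock k)).flatten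

/-- An augmented `k`-Dyck path: a skew Dyck path of the form
`U^{b_1} D^{k-1} L D ⋯ U^{b_m} D^{k-1} L D` with all `b_i` positive. -/
def IsAugmented (k : ℕ) (w : List Step) : Prop :=
  IsSkewDyck w ∧ ∃ b : List ℕ, (∀ x ∈ b, 0 < x) ∧ w = augForm k b

/-- An augmented `k`-Dyck path of size `m`. -/
def IsAugmentedOfSize (k m : ℕ) (w : List Step) : Prop :=
  IsSkewDyck w ∧ ∃ b : List ℕ, b.length = m ∧ (∀ x ∈ b, 0 < x) ∧ w = augForm k b

/-- A tailed `k`-box path ends with the factor `U^{k+1} D^k L`. -/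
def Tailed (k : ℕ) (w : List Step) : Prop :=
  (List.replicate (k+1) Step.U ++ List.replicate k Step.D ++ [Step.L]) <:+ w


/-! ### Auxiliary lemmas -/

section Aux

open Step

@[simp] lemma countU_nil' : countU [] = 0 := rfl
@[simp] lemma countD_nil' : countD [] = 0 := rfl
@[simp] lemma countL_nil' : countL [] = 0 := rfl
@[simp] lemma countU_append (x y : List Step) : countU (x ++ y) = countU x + countU y :=
  List.count_append
@[simp] lemma countD_append (x y : List Step) : countD (x ++ y) = countD x + countD y :=
  List.count_append
@[simp] lemma countL_append (x y : List Step) : countL (x ++ y) = countL x + countL y :=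
  List.count_append
@[simp] lemma countU_cons (a : Step) (w : List Step) :
    countU (a :: w) = countU w + (if a = Step.U then 1 else 0) := by
  simp [countU, List.count_cons]
@[simp] lemma countD_cons (a : Step) (w : List Step) :
    countD (a :: w) = countD w + (if a = Step.D then 1 else 0) := by
  simp [countD, List.count_cons]
@[simp] lemma countL_cons (a : Step) (w : List Step) :
    countL (a :: w) = countL w + (if a = Step.L then 1 else 0) := by
  simp [countL, List.count_cons]
@[simp] lemma countU_replU (n : ℕ) : countU (List.replicate n Step.U) = n := by
  simp [countU]
@[simp] lemma countU_replD (n : ℕ) : countU (List.replicate n Step.D) = 0 := by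
  simp [countU, List.count_replicate]
@[simp] lemma countD_replD (n : ℕ) : countD (List.replicate n Step.D) = n := by
  simp [countD]
@[simp] lemma countD_replU (n : ℕ) : countD (List.replicate n Step.U) = 0 := by
  simp [countD, List.count_replicate]
@[simp] lemma countL_replD (n : ℕ) : countL (List.replicate n Step.D) = 0 := by
  simp [countL, List.count_replicate]
@[simp] lemma countL_replU (n : ℕ) : countL (List.replicate n Step.U) = 0 := by
  simp [countL, List.count_replicate]

lemma total_count (w : List Step) : countU w + (countD w + countL w) = w.length := by
  induction w with
  | nil => simp
  | cons a t ih => cases a <;> simp <;> omega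

lemma countU_eq_zero {w : List Step} (h : ∀ c ∈ w, c ≠ Step.U) : countU w = 0 :=
  List.count_eq_zero.mpr (fun hU => (h _ hU) rfl)

/-! numOccurrences -/

lemma numOcc_nil (f : List Step) (hf : f ≠ []) : numOccurrences f [] = 0 := by
  unfold numOccurrences
  rw [Finset.card_eq_zero, Finset.filter_eq_empty_iff]
  intro i _
  simp only [List.drop_nil]
  intro h
  exact hf (List.prefix_nil.mp h)

lemma numOcc_cons (f : List Step) (a : Step) (w : List Step) :
    numOccurrences f (a :: w) = numOccurrences f w + (if f <+: a :: w then 1 else 0) := by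
  unfold numOccurrences
  rw [Finset.card_filter, Finset.card_filter]
  simp only [List.length_cons]
  rw [Finset.sum_range_succ' (fun i => if f <+: (a :: w).drop i then 1 else 0) (w.length + 1)]
  simp only [List.drop_succ_cons, List.drop_zero]

/-! the chain relation -/

def ok (a b : Step) : Prop := ¬(a = Step.U ∧ b = Step.L) ∧ ¬(a = Step.L ∧ b = Step.U)

lemma pair_prefix_iff (a b c : Step) (t : List Step) :
    [a, b] <+: c :: t ↔ a = c ∧ ∃ t', t = b :: t' := by
  constructor
  · rintro ⟨r, hr⟩
    simp only [List.cons_append] at hr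
    cases hr
    exact ⟨rfl, r, rfl⟩
  · rintro ⟨rfl, t', rfl⟩
    exact ⟨t', rfl⟩

lemma chain_ok_iff (w : List Step) :
    List.IsChain ok w ↔ (¬ [Step.U, Step.L] <:+: w ∧ ¬ [Step.L, Step.U] <:+: w) := by
  induction w with
  | nil => simp [List.isChain_nil]
  | cons c t ih =>
    rw [List.infix_cons_iff, List.infix_cons_iff]
    cases t with
    | nil =>
      have h1 : ∀ a b : Step, ¬ ([a, b] <+: [c]) := fun a b h => by simpa using h.length_le
      have h2 : ∀ a b : Step, ¬ ([a, b] <:+: ([] : List Step)) := fun a b h => by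
        simpa using h.length_le
      simp [h1, h2]
    | cons d t' =>
      rw [List.isChain_cons_cons, ih]
      rw [pair_prefix_iff, pair_prefix_iff]
      constructor
      · rintro ⟨hok, h1, h2⟩
        refine ⟨?_, ?_⟩
        · rintro (⟨rfl, t'', ht⟩ | h)
          · cases ht; exact hok.1 ⟨rfl, rfl⟩
          · exact h1 h
        · rintro (⟨rfl, t'', ht⟩ | h)
          · cases ht; exact hok.2 ⟨rfl, rfl⟩
          · exact h2 h
      · rintro ⟨h1, h2⟩
        refine ⟨⟨?_, ?_⟩, ?_, ?_⟩
        · rintro ⟨rfl, rfl⟩; exact h1 (Or.inl ⟨rfl, t', rfl⟩)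
        · rintro ⟨rfl, rfl⟩; exact h2 (Or.inl ⟨rfl, t', rfl⟩)
        · exact fun h => h1 (Or.inr h)
        · exact fun h => h2 (Or.inr h)

lemma skew_chain {w : List Step} (h : IsSkewDyck w) : List.IsChain ok w :=
  (chain_ok_iff w).mpr ⟨h.2.2.1, h.2.2.2⟩

lemma prefix_append_cases {α : Type*} : ∀ (x : List α) {p y : List α}, p <+: x ++ y →
    p <+: x ∨ ∃ q, q <+: y ∧ p = x ++ q := by
  intro x
  induction x with
  | nil => intro p y h; exact Or.inr ⟨p, h, rfl⟩
  | cons a x ih =>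
    intro p y h
    cases p with
    | nil => exact Or.inl (List.nil_prefix)
    | cons b p' =>
      rw [List.cons_append, List.cons_prefix_cons] at h
      obtain ⟨rfl, h⟩ := h
      rcases ih h with h' | ⟨q, hq, rfl⟩
      · exact Or.inl (List.cons_prefix_cons.mpr ⟨rfl, h'⟩)
      · exact Or.inr ⟨q, hq, rfl⟩

end Aux

section Aux2

/-- The descent tail `D^k L`. -/
def DkL (k : ℕ) : List Step := List.replicate k Step.D ++ [Step.L]

lemma boxFactor_eq (k : ℕ) : boxFactor k = Step.U :: DkL k := rfl

@[simp] lemma DkL_length (k : ℕ) : (DkL k).length = k + 1 := by simp [DkL]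

lemma mem_DkL {k : ℕ} {c : Step} (h : c ∈ DkL k) : c = Step.D ∨ c = Step.L := by
  rcases List.mem_append.mp h with h | h
  · exact Or.inl (List.eq_of_mem_replicate h)
  · simp at h; exact Or.inr h

lemma DkL_ne_nil (k : ℕ) : DkL k ≠ [] := by simp [DkL]

lemma boxFactor_ne_nil (k : ℕ) : boxFactor k ≠ [] := by simp [boxFactor]

lemma box_prefix_cons {k : ℕ} {a : Step} {w : List Step} :
    boxFactor k <+: a :: w ↔ a = Step.U ∧ DkL k <+: w := by
  rw [boxFactor_eq, List.cons_prefix_cons]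
  tauto

lemma not_DkL_prefix_headU {k : ℕ} (hk : 1 ≤ k) {z : List Step}
    (hz : z.head? = some Step.U) : ¬ DkL k <+: z := by
  intro h
  obtain ⟨k', rfl⟩ : ∃ k', k = k' + 1 := ⟨k - 1, by omega⟩
  rw [DkL, List.replicate_succ, List.cons_append] at h
  cases z with
  | nil => exact absurd (List.prefix_nil.mp h) (by simp)
  | cons c t =>
    rw [List.cons_prefix_cons] at h
    simp [← h.1] at hz

lemma occ_cons_nonU {k : ℕ} {a : Step} (ha : a ≠ Step.U) (w : List Step) :
    numOccurrences (boxFactor k) (a :: w) = numOccurrences (boxFactor k) w := by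
  rw [numOcc_cons, if_neg, Nat.add_zero]
  rw [box_prefix_cons]
  tauto

lemma occ_nonU_append {k : ℕ} {r : List Step} (hr : ∀ c ∈ r, c ≠ Step.U) (z : List Step) :
    numOccurrences (boxFactor k) (r ++ z) = numOccurrences (boxFactor k) z := by
  induction r with
  | nil => rfl
  | cons c t ih =>
    rw [List.cons_append, occ_cons_nonU (hr c (by simp))]
    exact ih (fun x hx => hr x (by simp [hx]))

lemma occ_cons_U {k : ℕ} (w : List Step) :
    numOccurrences (boxFactor k) (Step.U :: w) =
      numOccurrences (boxFactor k) w + (if DkL k <+: w then 1 else 0) := by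
  rw [numOcc_cons]
  congr 1
  simp [box_prefix_cons]

lemma occ_repU {k : ℕ} (hk : 1 ≤ k) {a : ℕ} (ha : 1 ≤ a) (z : List Step) :
    numOccurrences (boxFactor k) (List.replicate a Step.U ++ z) =
      numOccurrences (boxFactor k) z + (if DkL k <+: z then 1 else 0) := by
  induction a with
  | zero => omega
  | succ a ih =>
    rcases Nat.eq_or_lt_of_le ha with h1 | h1
    · have : a = 0 := by omega
      subst this
      simpa using occ_cons_U z
    · have ha' : 1 ≤ a := by omega
      have hneg : ¬ DkL k <+: List.replicate a Step.U ++ z := by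
        apply not_DkL_prefix_headU hk
        obtain ⟨a', rfl⟩ : ∃ a', a = a' + 1 := ⟨a - 1, by omega⟩
        simp [List.replicate_succ]
      rw [List.replicate_succ, List.cons_append, occ_cons_U, if_neg hneg, Nat.add_zero, ih ha']

lemma occ_empty {k : ℕ} : numOccurrences (boxFactor k) [] = 0 :=
  numOcc_nil _ (boxFactor_ne_nil k)

/-- DkL prefix of `r ++ z` where `r` has no `U` and `z` starts with `U` (or is empty). -/
lemma DkL_prefix_split {k : ℕ} {r z : List Step} (hr : ∀ c ∈ r, c ≠ Step.U)
    (hz : z = [] ∨ z.head? = some Step.U) :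
    DkL k <+: r ++ z ↔ DkL k <+: r := by
  constructor
  · intro h
    rcases prefix_append_cases r h with h | ⟨q, hq, hrq⟩
    · exact h
    · cases q with
      | nil => rw [List.append_nil] at hrq; exact hrq ▸ List.prefix_refl _
      | cons c t =>
        exfalso
        have hc : c ∈ DkL k := by rw [hrq]; simp
        rcases hz with rfl | hz
        · exact absurd (List.prefix_nil.mp hq) (by simp)
        · obtain ⟨s, hs⟩ := hq
          have hzc : z.head? = some c := by rw [← hs]; rfl
          rw [hzc] at hz
          have hcU : c = Step.U := Option.some.inj hz
          rcases mem_DkL hc with h' | h' <;> simp [h'] at hcU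
  · intro h
    exact h.trans (List.prefix_append r z)

end Aux2

section Aux3

lemma augForm_nil (k : ℕ) : augForm k [] = [] := rfl

lemma augForm_cons (k x : ℕ) (b : List ℕ) :
    augForm k (x :: b) = augBlock k x ++ augForm k b := by
  simp [augForm]

lemma augBlock_succ (k x : ℕ) :
    augBlock (k+1) x =
      List.replicate x Step.U ++ List.replicate k Step.D ++ [Step.L, Step.D] := by
  simp [augBlock]

@[simp] lemma countU_augBlock (k x : ℕ) : countU (augBlock (k+1) x) = x := by
  simp [augBlock_succ]
@[simp] lemma countD_augBlock (k x : ℕ) : countD (augBlock (k+1) x) = k + 1 := by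
  simp [augBlock_succ]
@[simp] lemma countL_augBlock (k x : ℕ) : countL (augBlock (k+1) x) = 1 := by
  simp [augBlock_succ]

lemma countU_augForm (k : ℕ) (b : List ℕ) : countU (augForm (k+1) b) = b.sum := by
  induction b with
  | nil => simp [augForm_nil]
  | cons x b ih => simp [augForm_cons, augBlock_succ, ih]

lemma countDL_augForm (k : ℕ) (b : List ℕ) :
    countD (augForm (k+1) b) + countL (augForm (k+1) b) = (k+2) * b.length := by
  induction b with
  | nil => simp [augForm_nil]
  | cons x b ih =>
    simp only [augForm_cons, countD_append, countL_append, countD_augBlock, countL_augBlock,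
      List.length_cons, Nat.mul_succ]
    omega

lemma countL_augForm (k : ℕ) (b : List ℕ) : countL (augForm (k+1) b) = b.length := by
  induction b with
  | nil => simp [augForm_nil]
  | cons x b ih => simp [augForm_cons, augBlock_succ, ih]

lemma boxForm_single (k a : ℕ) :
    boxForm k [a] = List.replicate a Step.U ++ List.replicate k Step.D ++ [Step.L] := rfl

lemma boxForm_cons2 (k a b : ℕ) (r : List ℕ) :
    boxForm k (a :: b :: r) =
      List.replicate a Step.U ++ List.replicate k Step.D ++ [Step.L, Step.D] ++
        boxForm k (b :: r) := rfl

lemma boxSplit (k : ℕ) : ∀ (x : List ℕ) {y : List ℕ}, y ≠ [] →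
    boxForm k (x ++ y) = augForm (k+1) x ++ boxForm k y := by
  intro x
  induction x with
  | nil => intro y _; simp [augForm_nil]
  | cons a x ih =>
    intro y hy
    cases x with
    | nil =>
      obtain ⟨c, y', rfl⟩ := List.exists_cons_of_ne_nil hy
      show boxForm k (a :: c :: y') = _
      rw [boxForm_cons2, augForm_cons, augForm_nil, augBlock_succ]
      simp
    | cons b x' =>
      rw [List.cons_append, List.cons_append, boxForm_cons2, ← List.cons_append,
        ih hy]
      simp [augForm_cons, augBlock_succ, List.append_assoc]

lemma boxDec (k : ℕ) {c : ℕ} (hc : 1 ≤ c) (v : List ℕ) :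
    boxForm k (c :: v) = Step.U :: boxForm k ((c-1) :: v) := by
  obtain ⟨c', rfl⟩ : ∃ c', c = c' + 1 := ⟨c - 1, by omega⟩
  cases v with
  | nil => simp [boxForm_single, List.replicate_succ]
  | cons b r => simp [boxForm_cons2, List.replicate_succ]

lemma countU_boxForm (k : ℕ) : ∀ {u : List ℕ}, u ≠ [] → countU (boxForm k u) = u.sum := by
  intro u
  induction u with
  | nil => intro h; exact absurd rfl h
  | cons a u ih =>
    intro _
    cases u with
    | nil => simp [boxForm_single]
    | cons b r => rw [boxForm_cons2]; simp [ih (by simp)]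

lemma countDL_boxForm (k : ℕ) : ∀ {u : List ℕ}, u ≠ [] →
    countD (boxForm k u) + countL (boxForm k u) + 1 = (k+2) * u.length := by
  intro u
  induction u with
  | nil => intro h; exact absurd rfl h
  | cons a u ih =>
    intro _
    cases u with
    | nil =>
      simp only [boxForm_single, countD_append, countL_append, List.length_singleton]
      simp
    | cons b r =>
      rw [boxForm_cons2]
      have := ih (by simp)
      simp only [countD_append, countL_append, List.length_cons, Nat.mul_succ] at this ⊢
      simp at this ⊢
      omega

lemma augForm_prefix_boxForm (k : ℕ) {u : List ℕ} {i : ℕ} (hi : i < u.length) :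
    augForm (k+1) (u.take i) <+: boxForm k u := by
  have hd : u.drop i ≠ [] := by
    intro h
    have := List.drop_eq_nil_iff.mp h
    omega
  have := boxSplit k (u.take i) hd
  rw [List.take_append_drop] at this
  rw [this]
  exact List.prefix_append _ _

end Aux3

section Peel

lemma peel {w : List Step} (hhead : w.head? = some Step.U)
    (hchain : List.IsChain ok w) {h : ℕ}
    (hbal : countD w + countL w = h + countU w) :
    ∃ a r w', 1 ≤ a ∧ r ≠ [] ∧ (∀ c ∈ r, c ≠ Step.U) ∧
      (w' = [] ∨ w'.head? = some Step.U) ∧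
      w = List.replicate a Step.U ++ r ++ w' := by
  classical
  set p : Step → Bool := fun c => c == Step.U with hp
  set x := w.takeWhile p with hx
  set rest := w.dropWhile p with hrest
  have hxw : x ++ rest = w := List.takeWhile_append_dropWhile
  have hxU : ∀ c ∈ x, c = Step.U := by
    intro c hc
    have := List.mem_takeWhile_imp hc
    simpa [hp] using this
  have hxrep : x = List.replicate x.length Step.U := List.eq_replicate_of_mem hxU
  have hane : x ≠ [] := by
    obtain ⟨c, t, rfl⟩ := List.exists_cons_of_ne_nil (l := w)
      (by intro hw; rw [hw] at hhead; simp at hhead)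
    have hc : c = Step.U := by simpa using hhead
    subst hc
    simp [hx, List.takeWhile, hp]
  have ha : 1 ≤ x.length := List.length_pos_iff.mpr hane
  have hrestne : rest ≠ [] := by
    intro hre
    have hwx : w = List.replicate x.length Step.U := by
      conv_lhs => rw [← hxw, hre, List.append_nil, hxrep]
    rw [hwx] at hbal
    simp at hbal
    omega
  obtain ⟨c, t, hct⟩ := List.exists_cons_of_ne_nil hrestne
  have hcU : c ≠ Step.U := by
    have := List.head?_dropWhile_not p w
    rw [← hrest, hct] at this
    simp [hp] at this
    exact this
  have hcL : c ≠ Step.L := by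
    intro hcl
    subst hcl
    rw [← hxw] at hchain
    have := (List.isChain_append.mp hchain).2.2
    have hlast : x.getLast? = some Step.U := by
      rw [hxrep, List.getLast?_replicate, if_neg (by omega)]
    have hok := this Step.U (by rw [hlast]; rfl) Step.L (by rw [hct]; rfl)
    exact hok.1 ⟨rfl, rfl⟩
  set q : Step → Bool := fun c => !(c == Step.U) with hq
  set r := rest.takeWhile q with hr
  set w' := rest.dropWhile q with hw'
  have hrw : r ++ w' = rest := List.takeWhile_append_dropWhile
  have hrU : ∀ c ∈ r, c ≠ Step.U := by
    intro c hc
    have := List.mem_takeWhile_imp hc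
    simpa [hq] using this
  have hqc : q c = true := by simp [hq, hcU]
  have hrne : r ≠ [] := by
    rw [hr, hct, List.takeWhile_cons, hqc]
    simp
  have hw'head : w' = [] ∨ w'.head? = some Step.U := by
    cases hw'' : w' with
    | nil => exact Or.inl rfl
    | cons d t' =>
      right
      have := List.head?_dropWhile_not q rest
      rw [← hw', hw''] at this
      simp [hq] at this
      simp [this]
  exact ⟨x.length, r, w', ha, hrne, hrU, hw'head, by
    rw [List.append_assoc, hrw, ← hxrep, hxw]⟩

end Peel

section ForwardMain

lemma forward_main (k : ℕ) (hk : 1 ≤ k) :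
    ∀ N w h, w.length ≤ N → w.head? = some Step.U →
    (∀ p, p <+: w → countD p + countL p ≤ h + countU p) →
    (countD w + countL w = h + countU w) →
    List.IsChain ok w →
    (k+2) * numOccurrences (boxFactor k) w ≤ countU w + h + 1 ∧
    ((k+2) * numOccurrences (boxFactor k) w = countU w + h + 1 →
      ∃ u, u ≠ [] ∧ (∀ x ∈ u, 0 < x) ∧ w = boxForm k u) := by
  intro N
  induction N with
  | zero =>
    intro w h hlen hhead _ _ _
    cases w with
    | nil => simp at hhead
    | cons a t => simp at hlen
  | succ N ih =>
    intro w h hlen hhead hpre hbal hchain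
    obtain ⟨a, r, w', ha, hrne, hrU, hw'head, hweq⟩ := peel hhead hchain hbal
    have hrUc : countU r = 0 := countU_eq_zero hrU
    have hDLr : countD r + countL r = r.length := by
      have := total_count r; omega
    have hcu : countU w = a + countU w' := by
      rw [hweq]; simp [hrUc]
    have hcd : countD w + countL w = countD r + countL r + (countD w' + countL w') := by
      rw [hweq]; simp; omega
    have hrpre : r.length ≤ h + a := by
      have hp : (List.replicate a Step.U ++ r) <+: w := by
        rw [hweq]; exact List.prefix_append _ _
      have := hpre _ hp
      simp at this
      omega
    have hocc : numOccurrences (boxFactor k) w =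
        numOccurrences (boxFactor k) w' + (if DkL k <+: r then 1 else 0) := by
      rw [hweq, List.append_assoc, occ_repU hk ha, occ_nonU_append hrU]
      simp only [DkL_prefix_split hrU hw'head]
    have hrlen : 1 ≤ r.length := List.length_pos_iff.mpr hrne
    rcases hw'head with hw'nil | hw'U
    · -- no more word after first descent run
      subst hw'nil
      rw [List.append_nil] at hweq
      have hbal' : r.length = h + a := by
        rw [hweq] at hbal; simp [hDLr] at hbal; omega
      have hcu' : countU w = a := by simp [hcu]
      rw [hocc, occ_empty, Nat.zero_add]
      by_cases hbox : DkL k <+: r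
      · have hlb : k + 1 ≤ r.length := by
          have := hbox.length_le; simpa using this
        rw [if_pos hbox]
        constructor
        · omega
        · intro heq
          have hr1 : r.length = k + 1 := by omega
          have hreq : r = DkL k := (hbox.eq_of_length (by simp [hr1])).symm
          refine ⟨[a], by simp, by simp; omega, ?_⟩
          rw [hweq, hreq, boxForm_single, DkL, List.append_assoc]
      · rw [if_neg hbox]
        constructor
        · omega
        · intro heq
          omega
    · -- there is a remainder w'
      have hw'ne : w' ≠ [] := by
        intro hc; rw [hc] at hw'U; simp at hw'U
      have hlen' : w'.length ≤ N := by
        rw [hweq] at hlen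
        simp at hlen
        omega
      have hh' : (h + a - r.length) + r.length = h + a := by omega
      set h' := h + a - r.length with hh'def
      have hpre' : ∀ p, p <+: w' → countD p + countL p ≤ h' + countU p := by
        intro p hp
        obtain ⟨t, ht⟩ := hp
        have hq : (List.replicate a Step.U ++ r ++ p) <+: w := by
          refine ⟨t, ?_⟩
          rw [hweq, ← ht]
          simp [List.append_assoc]
        have := hpre _ hq
        simp [hDLr] at this ⊢
        omega
      have hbal' : countD w' + countL w' = h' + countU w' := by
        omega
      have hchain' : List.IsChain ok w' := by
        refine hchain.suffix ⟨List.replicate a Step.U ++ r, ?_⟩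
        rw [hweq, List.append_assoc]
      obtain ⟨IH1, IH2⟩ := ih w' h' hlen' hw'U hpre' hbal' hchain'
      by_cases hbox : DkL k <+: r
      · -- the first run carries a box
        have hlb : k + 1 ≤ r.length := by
          have := hbox.length_le; simpa using this
        have hrchain : List.IsChain ok (r ++ w') := by
          refine hchain.suffix ⟨List.replicate a Step.U, ?_⟩
          rw [hweq, List.append_assoc]
        have hnoL : r.getLast? ≠ some Step.L := by
          intro hL
          have := (List.isChain_append.mp hrchain).2.2
          have hok := this Step.L (by rw [hL]; rfl) Step.U (by rw [hw'U]; rfl)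
          exact hok.2 ⟨rfl, rfl⟩
        have hlb2 : k + 2 ≤ r.length := by
          rcases Nat.eq_or_lt_of_le hlb with h1 | h1
          · exfalso
            have hreq : r = DkL k := (hbox.eq_of_length (by simp [← h1])).symm
            apply hnoL
            rw [hreq, DkL, List.getLast?_append]
            rfl
          · omega
        have hX : (k+2) * numOccurrences (boxFactor k) w =
            (k+2) * numOccurrences (boxFactor k) w' + (k+2) := by
          rw [hocc, if_pos hbox]; ring
        constructor
        · omega
        · intro heq
          have hIHeq : (k+2) * numOccurrences (boxFactor k) w' = countU w' + h' + 1 ∧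
              r.length = k + 2 := by omega
          obtain ⟨u', hu'ne, hu'pos, hu'eq⟩ := IH2 hIHeq.1
          -- identify r = D^k L D
          obtain ⟨t, hrt⟩ := hbox
          have htlen : t.length = 1 := by
            have := congrArg List.length hrt
            simp at this
            omega
          obtain ⟨c, hc⟩ := List.length_eq_one_iff.mp htlen
          subst hc
          have hcne : c ≠ Step.U := by
            apply hrU
            rw [← hrt]; simp
          have hcneL : c ≠ Step.L := by
            intro hcl
            apply hnoL
            rw [← hrt, hcl, List.getLast?_append]
            rfl
          have hcD : c = Step.D := by cases c <;> simp_all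
          subst hcD
          obtain ⟨b, rest, hbr⟩ := List.exists_cons_of_ne_nil hu'ne
          refine ⟨a :: u', by simp, ?_, ?_⟩
          · intro x hx
            rcases List.mem_cons.mp hx with rfl | hx
            · omega
            · exact hu'pos x hx
          · rw [hweq, ← hrt, hu'eq, hbr, boxForm_cons2, DkL]
            simp [List.append_assoc]
      · -- no box in the first run
        have hX : (k+2) * numOccurrences (boxFactor k) w =
            (k+2) * numOccurrences (boxFactor k) w' := by
          rw [hocc, if_neg hbox]; ring
        constructor
        · omega
        · intro heq
          exfalso
          omega

end ForwardMain

section Normal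

lemma box_to_normal {k n : ℕ} (hk : 1 ≤ k) (hn : 1 ≤ n) {w : List Step}
    (hw : IsBoxPath k n w) :
    ∃ u : List ℕ, u ≠ [] ∧ (∀ x ∈ u, 0 < x) ∧
      (∀ i, i < u.length → (k+2) * i ≤ (u.take i).sum) ∧
      u.sum + 1 = (k+2) * u.length ∧
      w = boxForm k u := by
  obtain ⟨⟨hpre, hbal, hul, hlu⟩, hsemi, hocc⟩ := hw
  have hsemi' : countU w = (k+2)*n - 1 := hsemi
  have hmul : n ≤ (k+2) * n := Nat.le_mul_of_pos_left n (by omega)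
  have hmul2 : k + 2 ≤ (k+2) * n := Nat.le_mul_of_pos_right _ (by omega)
  have hcu : countU w + 1 = (k+2) * n := by omega
  have hwne : w ≠ [] := by
    intro hc
    rw [hc] at hsemi'
    simp at hsemi'
    omega
  obtain ⟨c, t, rfl⟩ := List.exists_cons_of_ne_nil hwne
  have hchead : c = Step.U := by
    have := hpre [c] ⟨t, rfl⟩
    cases c <;> simp at this ⊢
  subst hchead
  have hmain := forward_main k hk (Step.U :: t).length (Step.U :: t) 0 (le_refl _)
    rfl (by intro p hp; simpa using hpre p hp) (by omega) (skew_chain ⟨hpre, hbal, hul, hlu⟩)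
  obtain ⟨u, hne, hpos, heq⟩ := hmain.2 (by rw [hocc]; omega)
  refine ⟨u, hne, hpos, ?_, ?_, heq⟩
  · intro i hi
    have hp := hpre _ (heq ▸ augForm_prefix_boxForm k hi)
    rw [countU_augForm] at hp
    have hdl := countDL_augForm k (u.take i)
    rw [List.length_take] at hdl
    have : min i u.length = i := by omega
    rw [this] at hdl
    omega
  · have h1 := countU_boxForm k hne
    have h2 := countDL_boxForm k hne
    rw [← heq] at h1 h2
    omega

end Normal

section AugSkew

lemma DL_le_len (p : List Step) : countD p + countL p ≤ p.length := by
  have := total_count p; omega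

lemma prefix_repU_counts {p : List Step} {n : ℕ} (h : p <+: List.replicate n Step.U) :
    countD p + countL p = 0 := by
  have h1 : countD p ≤ countD (List.replicate n Step.U) :=
    List.Sublist.count_le _ h.sublist
  have h2 : countL p ≤ countL (List.replicate n Step.U) :=
    List.Sublist.count_le _ h.sublist
  simp at h1 h2
  omega

lemma aug_prefix (k : ℕ) : ∀ (b : List ℕ) (h : ℕ),
    (∀ i, i ≤ b.length → (k+2) * i ≤ h + (b.take i).sum) →
    ∀ p, p <+: augForm (k+1) b → countD p + countL p ≤ h + countU p := by
  intro b
  induction b with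
  | nil =>
    intro h _ p hp
    rw [augForm_nil, List.prefix_nil] at hp
    subst hp
    simp
  | cons x b ih =>
    intro h hcond p hp
    have hx : k + 2 ≤ h + x := by
      have := hcond 1 (by simp)
      simpa using this
    rw [augForm_cons, augBlock_succ] at hp
    rcases prefix_append_cases _ hp with hp1 | ⟨q, hq, rfl⟩
    · -- inside the block
      rcases prefix_append_cases _ hp1 with hp2 | ⟨q, hq, rfl⟩
      · rcases prefix_append_cases _ hp2 with hp3 | ⟨q, hq, rfl⟩
        · rw [prefix_repU_counts hp3]; omega
        · have h1 : countD q + countL q ≤ k := by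
            have := (DL_le_len q)
            have := hq.length_le
            simp at this
            omega
          simp [prefix_repU_counts (List.prefix_refl _), h1]
          omega
      · have h1 : countD q + countL q ≤ 2 := by
          have := DL_le_len q
          have := hq.length_le
          simp at this
          omega
        simp
        omega
    · -- block plus a prefix of the rest
      have hih := ih (h + x - (k+2)) (by
        intro i hi
        have := hcond (i+1) (by simp; omega)
        simp [List.take_succ_cons, Nat.mul_succ] at this ⊢
        omega) q hq
      simp [augBlock_succ] at *
      omega

lemma chain_rep (n : ℕ) (a : Step) (hok : ok a a) : List.IsChain ok (List.replicate n a) := by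
  induction n with
  | zero => simp
  | succ n ihn =>
    rw [List.replicate_succ]
    apply List.isChain_cons.mpr
    refine ⟨?_, ihn⟩
    intro y hy
    cases n with
    | zero => simp at hy
    | succ m => rw [List.replicate_succ] at hy; simp at hy; subst hy; exact hok

lemma okUU : ok Step.U Step.U := by constructor <;> rintro ⟨h1, h2⟩ <;> simp_all
lemma okDD : ok Step.D Step.D := by constructor <;> rintro ⟨h1, h2⟩ <;> simp_all
lemma okUD : ok Step.U Step.D := by constructor <;> rintro ⟨h1, h2⟩ <;> simp_all
lemma okDL : ok Step.D Step.L := by constructor <;> rintro ⟨h1, h2⟩ <;> simp_all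
lemma okLD : ok Step.L Step.D := by constructor <;> rintro ⟨h1, h2⟩ <;> simp_all
lemma okDU : ok Step.D Step.U := by constructor <;> rintro ⟨h1, h2⟩ <;> simp_all

lemma chain_augBlock (k : ℕ) (hk : 1 ≤ k) {x : ℕ} (hx : 1 ≤ x) :
    List.IsChain ok (augBlock (k+1) x) := by
  rw [augBlock_succ, List.append_assoc]
  rw [List.isChain_append]
  refine ⟨chain_rep _ _ okUU, ?_, ?_⟩
  · rw [List.isChain_append]
    refine ⟨chain_rep _ _ okDD, ?_, ?_⟩
    · simp [List.isChain_cons_cons, okLD]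
    · intro a ha y hy
      rw [List.getLast?_replicate, if_neg (by omega)] at ha
      simp at ha hy
      subst ha
      subst hy
      exact okDL
  · intro a ha y hy
    rw [List.getLast?_replicate, if_neg (by omega)] at ha
    obtain ⟨k', rfl⟩ : ∃ k', k = k' + 1 := ⟨k - 1, by omega⟩
    simp [List.replicate_succ] at hy
    simp at ha
    subst ha
    rw [← hy]
    exact okUD

lemma getLast_augBlock (k x : ℕ) : (augBlock (k+1) x).getLast? = some Step.D := by
  rw [augBlock_succ, List.getLast?_append]
  rfl

lemma head_augForm (k : ℕ) : ∀ {b : List ℕ}, (∀ x ∈ b, 0 < x) →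
    (augForm (k+1) b) = [] ∨ (augForm (k+1) b).head? = some Step.U := by
  intro b hpos
  cases b with
  | nil => exact Or.inl rfl
  | cons x b =>
    right
    rw [augForm_cons, augBlock_succ]
    have hx : 0 < x := hpos x (by simp)
    obtain ⟨x', rfl⟩ : ∃ x', x = x' + 1 := ⟨x - 1, by omega⟩
    simp [List.replicate_succ]

lemma chain_augForm (k : ℕ) (hk : 1 ≤ k) : ∀ {b : List ℕ}, (∀ x ∈ b, 0 < x) →
    List.IsChain ok (augForm (k+1) b) := by
  intro b
  induction b with
  | nil => simp [augForm_nil]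
  | cons x b ih =>
    intro hpos
    rw [augForm_cons, List.isChain_append]
    refine ⟨chain_augBlock k hk (hpos x (by simp)),
      ih (fun y hy => hpos y (List.mem_cons_of_mem _ hy)), ?_⟩
    intro a ha y hy
    rw [getLast_augBlock] at ha
    rcases head_augForm k (fun y hy => hpos y (List.mem_cons_of_mem _ hy)) with hnil | hU
    · rw [hnil] at hy; simp at hy
    · rw [hU] at hy
      simp at ha hy
      subst ha
      rw [← hy]
      exact okDU

lemma aug_skew (k : ℕ) (hk : 1 ≤ k) {b : List ℕ} (hpos : ∀ x ∈ b, 0 < x)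
    (hcond : ∀ i, i ≤ b.length → (k+2) * i ≤ (b.take i).sum)
    (hsum : b.sum = (k+2) * b.length) :
    IsSkewDyck (augForm (k+1) b) := by
  have hch := (chain_ok_iff _).mp (chain_augForm k hk hpos)
  refine ⟨?_, ?_, hch.1, hch.2⟩
  · intro p hp
    have := aug_prefix k b 0 (by intro i hi; simpa using hcond i hi) p hp
    omega
  · rw [countU_augForm]
    have := countDL_augForm k b
    omega

lemma isAugmented_augForm (k : ℕ) (hk : 1 ≤ k) {b : List ℕ} (hpos : ∀ x ∈ b, 0 < x)
    (hcond : ∀ i, i ≤ b.length → (k+2) * i ≤ (b.take i).sum)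
    (hsum : b.sum = (k+2) * b.length) :
    IsAugmented (k+1) (augForm (k+1) b) :=
  ⟨aug_skew k hk hpos hcond hsum, b, hpos, rfl⟩

end AugSkew

section Build

lemma build (k : ℕ) (hk : 1 ≤ k) : ∀ (j : ℕ) (u : List ℕ), u ≠ [] →
    (∀ x ∈ u.tail, 0 < x) →
    (∀ i, i < u.length → (k+2) * i ≤ (u.take i).sum) →
    (u.sum + (k+2) = (k+2) * u.length + (j+1)) →
    ∃ μ : Fin (j+1) → List Step, (∀ i, IsAugmented (k+1) (μ i)) ∧
      boxForm k u = ((List.ofFn μ).map (fun m => m ++ [Step.U])).flatten ++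
        List.replicate k Step.D ++ [Step.L] := by
  intro j
  induction j with
  | zero =>
    intro u hne htail hcond hsum
    rcases List.eq_nil_or_concat u with rfl | ⟨v, c, huv⟩
    · exact absurd rfl hne
    rw [List.concat_eq_append] at huv
    subst huv
    have hlenv : v.length < (v ++ [c]).length := by simp
    have hcondv : (k+2) * v.length ≤ v.sum := by
      have := hcond v.length hlenv
      rw [List.take_left] at this
      exact this
    have hmul : (k+2) * (v ++ [c]).length = (k+2) * v.length + (k+2) := by
      simp [Nat.mul_succ]
    have hsumv : (v ++ [c]).sum = v.sum + c := by simp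
    have hkey : v.sum = (k+2) * v.length ∧ c = 1 := by
      have hc1 : 1 ≤ c := by
        cases v with
        | nil => simp at hsum; omega
        | cons a v' =>
          apply htail
          simp
      constructor <;> omega
    have htkeq : ∀ i, i ≤ v.length → (v ++ [c]).take i = v.take i := fun i hi =>
      List.take_append_of_le_length hi
    refine ⟨fun _ => augForm (k+1) v, ?_, ?_⟩
    · intro _
      apply isAugmented_augForm k hk
      · intro x hx
        cases v with
        | nil => simp at hx
        | cons a v' =>
          rcases List.mem_cons.mp hx with rfl | hx
          · have h1 := hcond 1 (by simp)
            rw [htkeq 1 (by simp)] at h1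
            simp at h1
            omega
          · exact htail x (by simp [hx])
      · intro i hi
        have := hcond i (by simp; omega)
        rw [htkeq i hi] at this
        exact this
      · exact hkey.1
    · have hbox : boxForm k (v ++ [c]) = augForm (k+1) v ++ boxForm k [1] := by
        rw [hkey.2]
        exact boxSplit k _ (by simp)
      rw [hbox]
      simp [boxForm_single, List.ofFn_succ, List.append_assoc]
  | succ j ihj =>
    intro u hne htail hcond hsum
    have hlen : 1 ≤ u.length := List.length_pos_iff.mpr hne
    set P : ℕ → Prop := fun i => (k+2) * i = (u.take i).sum with hP
    set s := Nat.findGreatest P (u.length - 1) with hs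
    have hs_le : s ≤ u.length - 1 := Nat.findGreatest_le _
    have hPs0 : P s := Nat.findGreatest_spec (P := P) (m := 0) (Nat.zero_le _) (by simp [hP])
    have hPs : (k+2) * s = (u.take s).sum := hPs0
    have hgt : ∀ i, s < i → i ≤ u.length - 1 → (k+2) * i + 1 ≤ (u.take i).sum := by
      intro i h1 h2
      have hng := Nat.findGreatest_is_greatest (P := P) (by omega : s < i) h2
      rw [hP] at hng
      simp only at hng
      have := hcond i (by omega)
      omega
    have hslt : s < u.length := by omega
    have hdropne : u.drop s ≠ [] := by
      intro hc
      rw [List.drop_eq_nil_iff] at hc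
      omega
    obtain ⟨c, v₂, hcv⟩ := List.exists_cons_of_ne_nil hdropne
    have hposall : ∀ x ∈ u, 0 < x := by
      intro x hx
      obtain ⟨h0, tu, rfl⟩ := List.exists_cons_of_ne_nil hne
      rcases List.mem_cons.mp hx with rfl | hx
      · cases tu with
        | nil => simp at hsum ⊢; omega
        | cons b tb =>
          have h1 := hcond 1 (by simp)
          simp at h1
          omega
      · exact htail x hx
    have hc1 : 1 ≤ c := by
      apply hposall
      have : c ∈ u.drop s := by rw [hcv]; simp
      exact (List.drop_suffix s u).subset this
    have hsum_ts : (u.take s).sum + (u.drop s).sum = u.sum := List.sum_take_add_sum_drop u s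
    have hlen_ts : s + (u.drop s).length = u.length := by
      rw [List.length_drop]; omega
    set u' : List ℕ := (c - 1) :: v₂ with hu'
    have hu'len : u'.length = u.length - s := by
      rw [hu']
      have := congrArg List.length hcv
      simp at this ⊢
      omega
    have hu'sum : u'.sum + 1 + (u.take s).sum = u.sum := by
      rw [hu']
      have : (u.drop s).sum = c + v₂.sum := by rw [hcv]; simp
      simp
      omega
    have hmulsplit : (k+2) * u.length = (k+2) * s + (k+2) * u'.length := by
      rw [← Nat.mul_add]
      congr 1
      omega
    have hu'ne : u' ≠ [] := by simp [hu']
    have htail' : ∀ x ∈ u'.tail, 0 < x := by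
      intro x hx
      rw [hu'] at hx
      simp at hx
      have : x ∈ u.drop (s+1) := by
        rw [← List.tail_drop, hcv]
        simpa using hx
      exact hposall x ((List.drop_suffix (s+1) u).subset this)
    have hcond' : ∀ i, i < u'.length → (k+2) * i ≤ (u'.take i).sum := by
      intro i hi
      cases i with
      | zero => simp
      | succ i0 =>
        have htake : (u.take (s + (i0+1))).sum = (u.take s).sum + c + (v₂.take i0).sum := by
          rw [List.take_add, hcv]
          simp
          omega
        have hu'take : (u'.take (i0+1)).sum = (c - 1) + (v₂.take i0).sum := by
          rw [hu']
          simp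
        have hgti := hgt (s + (i0+1)) (by omega) (by
          rw [hu'len] at hi
          omega)
        rw [Nat.mul_add] at hgti
        rw [hu'take]
        have hmi : (k+2) * (i0+1) ≤ (k+2) * (s + (i0+1)) := Nat.mul_le_mul_left _ (by omega)
        omega
    have hsum' : u'.sum + (k+2) = (k+2) * u'.length + (j+1) := by
      omega
    obtain ⟨μ', hμ'aug, hμ'eq⟩ := ihj u' hu'ne htail' hcond' hsum'
    have htk : ∀ x ∈ u.take s, 0 < x := fun x hx =>
      hposall x ((List.take_prefix s u).subset hx)
    have hcondtk : ∀ i, i ≤ (u.take s).length → (k+2) * i ≤ ((u.take s).take i).sum := by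
      intro i hi
      rw [List.take_take]
      rw [List.length_take] at hi
      have hmin : min i s = i := by omega
      rw [hmin]
      rcases Nat.eq_or_lt_of_le (show i ≤ s by omega) with h1 | h1
      · subst h1; omega
      · exact hcond i (by omega)
    have hsumtk : (u.take s).sum = (k+2) * (u.take s).length := by
      rw [List.length_take]
      have hmin : min s u.length = s := by omega
      rw [hmin]
      omega
    refine ⟨Fin.cons (augForm (k+1) (u.take s)) μ', ?_, ?_⟩
    · intro i
      rcases Fin.eq_zero_or_eq_succ i with rfl | ⟨i0, rfl⟩
      · rw [Fin.cons_zero]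
        exact isAugmented_augForm k hk htk hcondtk hsumtk
      · rw [Fin.cons_succ]
        exact hμ'aug i0
    · have h1 : boxForm k u = augForm (k+1) (u.take s) ++ boxForm k (c :: v₂) := by
        conv_lhs => rw [← List.take_append_drop s u, hcv]
        exact boxSplit k _ (by simp)
      have h2 : boxForm k (c :: v₂) = Step.U :: boxForm k u' := by
        rw [hu']
        exact boxDec k hc1 v₂
      rw [h1, h2, hμ'eq]
      rw [List.ofFn_succ]
      simp [Fin.cons_zero, Fin.cons_succ, List.append_assoc]

end Build

section Reverse

lemma skew_head {m : List Step} (h : IsSkewDyck m) : m = [] ∨ m.head? = some Step.U := by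
  cases m with
  | nil => exact Or.inl rfl
  | cons c t =>
    right
    have := h.1 [c] ⟨t, rfl⟩
    cases c <;> simp_all

lemma occ_aug (k : ℕ) (hk : 1 ≤ k) : ∀ (b : List ℕ), (∀ x ∈ b, 0 < x) → ∀ z,
    numOccurrences (boxFactor k) (augForm (k+1) b ++ z) =
      b.length + numOccurrences (boxFactor k) z := by
  intro b
  induction b with
  | nil => intro _ z; rw [augForm_nil, List.nil_append]; simp
  | cons x b ih =>
    intro hpos z
    rw [augForm_cons, augBlock_succ]
    have hx : 1 ≤ x := hpos x (by simp)
    simp only [List.append_assoc, List.cons_append, List.nil_append]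
    rw [occ_repU hk hx]
    have hnonU : ∀ c ∈ List.replicate k Step.D, c ≠ Step.U := by
      intro c hc
      rw [List.eq_of_mem_replicate hc]; simp
    rw [occ_nonU_append hnonU, occ_cons_nonU (by simp), occ_cons_nonU (by simp),
      ih (fun y hy => hpos y (by simp [hy]))]
    have hpre : DkL k <+: List.replicate k Step.D ++
        Step.L :: Step.D :: (augForm (k+1) b ++ z) := by
      refine ⟨Step.D :: (augForm (k+1) b ++ z), ?_⟩
      simp [DkL]
    rw [if_pos hpre]
    simp
    omega

lemma flat_countU (l : List (List Step)) :
    countU ((l.map (fun m => m ++ [Step.U])).flatten) = (l.map countU).sum + l.length := by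
  induction l with
  | nil => simp
  | cons m l ih => simp [ih]; omega

lemma flat_countD (l : List (List Step)) :
    countD ((l.map (fun m => m ++ [Step.U])).flatten) = (l.map countD).sum := by
  induction l with
  | nil => simp
  | cons m l ih => simp [ih]

lemma flat_countL (l : List (List Step)) :
    countL ((l.map (fun m => m ++ [Step.U])).flatten) = (l.map countL).sum := by
  induction l with
  | nil => simp
  | cons m l ih => simp [ih]

lemma flat_head (k : ℕ) {l : List (List Step)} (hl : ∀ m ∈ l, IsSkewDyck m) (hne : l ≠ [])
    (z : List Step) :
    (((l.map (fun m => m ++ [Step.U])).flatten) ++ z).head? = some Step.U := by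
  obtain ⟨m, l', rfl⟩ := List.exists_cons_of_ne_nil hne
  rcases skew_head (hl m (by simp)) with rfl | hU
  · simp
  · obtain ⟨c, t, rfl⟩ := List.exists_cons_of_ne_nil (by rintro rfl; simp at hU : m ≠ [])
    simp at hU
    simp [hU]

lemma flat_occ (k : ℕ) (hk : 1 ≤ k) : ∀ (l : List (List Step)),
    (∀ m ∈ l, IsAugmented (k+1) m) →
    numOccurrences (boxFactor k)
        (((l.map (fun m => m ++ [Step.U])).flatten) ++ (List.replicate k Step.D ++ [Step.L])) =
      (l.map countL).sum + (if l = [] then 0 else 1) := by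
  intro l
  induction l with
  | nil =>
    intro _
    simp only [List.map_nil, List.flatten_nil, List.nil_append]
    rw [show List.replicate k Step.D ++ [Step.L] = (List.replicate k Step.D ++ [Step.L]) ++ [] by
      simp]
    rw [occ_nonU_append (by
      intro c hc
      rcases List.mem_append.mp hc with hc | hc
      · rw [List.eq_of_mem_replicate hc]; simp
      · simp at hc; simp [hc])]
    simp [occ_empty]
  | cons m l ih =>
    intro hl
    obtain ⟨hskew, b, hbpos, hbeq⟩ := hl m (by simp)
    have hIH := ih (fun m' hm' => hl m' (by simp [hm']))
    have hcountL : countL m = b.length := by rw [hbeq, countL_augForm]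
    simp only [List.map_cons, List.flatten_cons, List.append_assoc, List.cons_append,
      List.nil_append]
    rw [hbeq, occ_aug k hk b hbpos, occ_cons_U]
    by_cases hl0 : l = []
    · subst hl0
      simp only [List.map_nil, List.flatten_nil, List.nil_append] at hIH ⊢
      rw [if_pos (show DkL k <+: List.replicate k Step.D ++ [Step.L] from List.prefix_refl _)]
      simp at hIH
      simp [hIH, countL_augForm]
    · have hhd : ((l.map (fun m => m ++ [Step.U])).flatten ++
          (List.replicate k Step.D ++ [Step.L])).head? = some Step.U :=
        flat_head k (fun m' hm' => (hl m' (by simp [hm'])).1) hl0 _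
      rw [if_neg (not_DkL_prefix_headU hk hhd), hIH, if_neg hl0]
      simp [countL_augForm]
      omega

end Reverse

section Reverse2

lemma getLast_augForm' (k : ℕ) : ∀ {b : List ℕ}, b ≠ [] →
    (augForm (k+1) b).getLast? = some Step.D := by
  intro b
  induction b with
  | nil => intro h; exact absurd rfl h
  | cons x b ih =>
    intro _
    rw [augForm_cons, List.getLast?_append]
    cases b with
    | nil => rw [augForm_nil]; simp [getLast_augBlock]
    | cons y c => rw [ih (by simp)]; rfl

lemma flat_pref : ∀ (l : List (List Step)), (∀ m ∈ l, IsSkewDyck m) →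
    ∀ p, p <+: (l.map (fun m => m ++ [Step.U])).flatten →
      countD p + countL p ≤ countU p := by
  intro l
  induction l with
  | nil =>
    intro _ p hp
    rw [List.map_nil, List.flatten_nil, List.prefix_nil] at hp
    subst hp
    simp
  | cons m l ih =>
    intro hl p hp
    simp only [List.map_cons, List.flatten_cons, List.append_assoc, List.singleton_append] at hp
    rcases prefix_append_cases m hp with hp1 | ⟨q, hq, rfl⟩
    · exact (hl m (by simp)).1 p hp1
    · have hbal := (hl m (by simp)).2.1
      cases q with
      | nil => simp; omega
      | cons c q' =>
        rw [List.cons_prefix_cons] at hq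
        obtain ⟨rfl, hq'⟩ := hq
        have := ih (fun m' hm' => hl m' (by simp [hm'])) q' hq'
        simp
        omega

lemma flat_bal : ∀ (l : List (List Step)), (∀ m ∈ l, IsSkewDyck m) →
    (l.map countU).sum = (l.map countD).sum + (l.map countL).sum := by
  intro l
  induction l with
  | nil => intro _; simp
  | cons m l ih =>
    intro hl
    have h1 := (hl m (by simp)).2.1
    have h2 := ih (fun m' hm' => hl m' (by simp [hm']))
    simp
    omega

lemma chain_tail (k : ℕ) : List.IsChain ok (List.replicate k Step.D ++ [Step.L]) := by
  rw [List.isChain_append]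
  refine ⟨chain_rep _ _ okDD, by simp, ?_⟩
  intro x hx y hy
  simp at hy
  rw [List.getLast?_replicate] at hx
  rcases Nat.eq_zero_or_pos k with rfl | hpos
  · simp at hx
  · rw [if_neg (by omega)] at hx
    simp at hx
    subst hx
    subst hy
    exact okDL

lemma chain_whole (k : ℕ) (hk : 1 ≤ k) : ∀ (l : List (List Step)),
    (∀ m ∈ l, IsAugmented (k+1) m) →
    List.IsChain ok ((l.map (fun m => m ++ [Step.U])).flatten ++
      (List.replicate k Step.D ++ [Step.L])) := by
  intro l
  induction l with
  | nil => simpa using chain_tail k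
  | cons m l ih =>
    intro hl
    simp only [List.map_cons, List.flatten_cons, List.append_assoc]
    obtain ⟨hskew, b, hbpos, hbeq⟩ := hl m (by simp)
    rw [List.isChain_append]
    refine ⟨skew_chain hskew, ?_, ?_⟩
    · rw [List.singleton_append, List.isChain_cons]
      refine ⟨?_, ih (fun m' hm' => hl m' (by simp [hm']))⟩
      intro y hy
      by_cases hl0 : l = []
      · subst hl0
        simp only [List.map_nil, List.flatten_nil, List.nil_append] at hy
        obtain ⟨k', rfl⟩ : ∃ k', k = k' + 1 := ⟨k - 1, by omega⟩
        rw [List.replicate_succ] at hy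
        simp at hy
        subst hy
        exact okUD
      · rw [flat_head k (fun m' hm' => (hl m' (by simp [hm'])).1) hl0] at hy
        simp at hy
        subst hy
        exact okUU
    · intro x hx y hy
      rw [List.singleton_append] at hy
      simp at hy
      subst hy
      cases hb0 : b with
      | nil => rw [hbeq, hb0, augForm_nil] at hx; simp at hx
      | cons z c =>
        rw [hbeq, getLast_augForm' k (by rw [hb0]; simp)] at hx
        simp at hx
        subst hx
        exact okDU

lemma sum_countU_eq (k : ℕ) : ∀ (l : List (List Step)), (∀ m ∈ l, IsAugmented (k+1) m) →
    (l.map countU).sum = (k+2) * (l.map countL).sum := by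
  intro l
  induction l with
  | nil => intro _; simp
  | cons m l ih =>
    intro hl
    obtain ⟨hskew, b, hbpos, hbeq⟩ := hl m (by simp)
    have h1 : countU m = (k+2) * countL m := by
      have hbal := hskew.2.1
      rw [hbeq] at hbal ⊢
      rw [countU_augForm, countL_augForm] at hbal ⊢
      have hDL := countDL_augForm k b
      rw [countL_augForm] at hDL
      omega
    have h2 := ih (fun m' hm' => hl m' (by simp [hm']))
    simp [h1, h2, Nat.mul_add]

lemma reverse_dir (k : ℕ) (hk : 1 ≤ k) (l : List (List Step)) (hlen : l.length = k + 1)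
    (hl : ∀ m ∈ l, IsAugmented (k+1) m) :
    ∃ n, 1 ≤ n ∧ IsBoxPath k n
      ((l.map (fun m => m ++ [Step.U])).flatten ++ List.replicate k Step.D ++ [Step.L]) := by
  have hlne : l ≠ [] := by intro h; rw [h] at hlen; simp at hlen
  set S := (l.map countL).sum with hS
  set w := (l.map (fun m => m ++ [Step.U])).flatten ++ List.replicate k Step.D ++ [Step.L]
    with hw
  have hassoc : w = (l.map (fun m => m ++ [Step.U])).flatten ++
      (List.replicate k Step.D ++ [Step.L]) := by rw [hw, List.append_assoc]
  have hskews : ∀ m ∈ l, IsSkewDyck m := fun m hm => (hl m hm).1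
  -- counts
  have hcU : countU w = (l.map countU).sum + (k+1) := by
    rw [hw]
    simp [flat_countU, hlen]
  have hcDL : countD w + countL w = (l.map countD).sum + (l.map countL).sum + (k+1) := by
    rw [hw]
    simp [flat_countD, flat_countL]
    omega
  have hbalflat := flat_bal l hskews
  have hsumU := sum_countU_eq k l hl
  rw [← hS] at hsumU
  refine ⟨S + 1, by omega, ?_, ?_, ?_⟩
  · -- skew Dyck
    have hchain := chain_whole k hk l hl
    rw [← hassoc] at hchain
    have hchain2 := (chain_ok_iff w).mp hchain
    refine ⟨?_, by omega, hchain2.1, hchain2.2⟩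
    intro p hp
    rw [hassoc] at hp
    rcases prefix_append_cases _ hp with hp1 | ⟨q, hq, rfl⟩
    · exact flat_pref l hskews p hp1
    · have hqlen : q.length ≤ k + 1 := by
        have := hq.length_le
        simpa using this
      have hqDL := DL_le_len q
      have hFU := flat_countU l
      have hFD := flat_countD l
      have hFL := flat_countL l
      simp only [countU_append, countD_append, countL_append]
      rw [hFU, hFD, hFL, hlen]
      omega
  · -- semilength
    show countU w = (k+2) * (S+1) - 1
    rw [hcU, hsumU, Nat.mul_succ]
    omega
  · -- occurrences
    rw [hassoc]
    rw [flat_occ k hk l hl, if_neg hlne, hS]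

end Reverse2

/-- A word is a `k`-box path (of some size `n ≥ 1`) iff it decomposes as
`μ_1 U μ_2 U ⋯ μ_{k+1} U D^k L` with each `μ_i` an augmented `(k+1)`-Dyck path. -/
theorem statement2 (k : ℕ) (hk : 1 ≤ k) (w : List Step) :
    (∃ n, 1 ≤ n ∧ IsBoxPath k n w) ↔
    (∃ μ : Fin (k+1) → List Step, (∀ i, IsAugmented (k+1) (μ i)) ∧
      w = ((List.ofFn μ).map (fun m => m ++ [Step.U])).flatten ++
            List.replicate k Step.D ++ [Step.L]) := by
  constructor
  · rintro ⟨n, hn, hbp⟩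
    obtain ⟨u, hne, hpos, hcond, hsum, hweq⟩ := box_to_normal hk hn hbp
    obtain ⟨μ, hμ, heq⟩ := build k hk k u hne (fun x hx => hpos x (List.mem_of_mem_tail hx))
      hcond (by omega)
    exact ⟨μ, hμ, by rw [hweq, heq]⟩
  · rintro ⟨μ, hμ, rfl⟩
    exact reverse_dir k hk (List.ofFn μ) (by simp) (by
      intro m hm
      obtain ⟨i, hi⟩ := List.mem_ofFn.mp hm
      rw [← hi]
      exact hμ i)
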